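/- Fix an even integer $m \ge 2$, $x \ge 0$, and a nonincreasing sequence $1 \ge \gamma_2 \ge \gamma_3 \ge \cdots \ge \gamma_{m+2} \ge 0$. Then $1 + \sum_{l=2}^{m-1} \frac{(\gamma_l - \gamma_m)x^l}{l!} + \gamma_m(e^x - 1 - x) \ge 1 + \sum_{l=2}^{m+1} \frac{(\gamma_l - \gamma_{m+2})x^l}{l!} + \gamma_{m+2}(e^x - 1 - x)$; i.e., the base of the exponential bound in the refined martingale inequality is nonincreasing in $m$. -/

import Mathlib

/-- the base of the exponential bound in the refined martingale inequality
is nonincreasing in the even parameter `m`. -/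
theorem stmt_14 (m : ℕ) (hm : 2 ≤ m) (hme : Even m) (x : ℝ) (hx : 0 ≤ x)
    (γ : ℕ → ℝ)
    (hγ01 : ∀ l, 2 ≤ l → l ≤ m + 2 → 0 ≤ γ l ∧ γ l ≤ 1)
    (hmono : ∀ l, 2 ≤ l → l + 1 ≤ m + 2 → γ (l + 1) ≤ γ l) :
    1 + (∑ l ∈ Finset.Icc 2 (m + 1), (γ l - γ (m + 2)) * x ^ l / l.factorial)
      + γ (m + 2) * (Real.exp x - 1 - x)
    ≤ 1 + (∑ l ∈ Finset.Icc 2 (m - 1), (γ l - γ m) * x ^ l / l.factorial)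
      + γ m * (Real.exp x - 1 - x) := by
  obtain ⟨k, rfl⟩ : ∃ k, m = k + 2 := ⟨m - 2, by omega⟩
  have hCA : γ (k + 3) ≤ γ (k + 2) := hmono (k + 2) (by omega) (by omega)
  have hBC : γ (k + 4) ≤ γ (k + 3) := hmono (k + 3) (by omega) (by omega)
  set A := γ (k + 2) with hA
  set C := γ (k + 3) with hC
  set B := γ (k + 4) with hB
  -- Taylor bound: partial sum up to k+3 of x^l/l! ≤ exp x
  have hexp : ∑ l ∈ Finset.Icc 2 (k + 3), x ^ l / l.factorial ≤ Real.exp x - 1 - x := by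
    have h := Real.sum_le_exp_of_nonneg hx (k + 4)
    have hsplit : ∑ i ∈ Finset.range (k + 4), x ^ i / i.factorial
        = 1 + x + ∑ l ∈ Finset.Icc 2 (k + 3), x ^ l / l.factorial := by
      rw [Finset.range_eq_Ico,
        ← Finset.sum_Ico_consecutive _ (by omega : 0 ≤ 2) (by omega : 2 ≤ k + 4)]
      have h2 : Finset.Icc 2 (k + 3) = Finset.Ico 2 (k + 4) := by
        exact (Finset.Ico_add_one_right_eq_Icc 2 (k + 3)).symm
      rw [h2]
      norm_num [Finset.sum_Ico_eq_sum_range, Finset.sum_range_succ]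
    linarith [hsplit ▸ h]
  -- split the sums
  have hsum3 : ∑ l ∈ Finset.Icc 2 (k + 3), x ^ l / l.factorial
      = (∑ l ∈ Finset.Icc 2 (k + 1), x ^ l / l.factorial)
        + x ^ (k + 2) / (k + 2).factorial + x ^ (k + 3) / (k + 3).factorial := by
    rw [Finset.sum_Icc_succ_top (by omega : 2 ≤ k + 3),
      Finset.sum_Icc_succ_top (by omega : 2 ≤ k + 2)]
  have hsumL : ∑ l ∈ Finset.Icc 2 (k + 2 + 1), (γ l - B) * x ^ l / l.factorial
      = (∑ l ∈ Finset.Icc 2 (k + 1), (γ l - B) * x ^ l / l.factorial)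
        + (A - B) * (x ^ (k + 2) / (k + 2).factorial)
        + (C - B) * (x ^ (k + 3) / (k + 3).factorial) := by
    rw [Finset.sum_Icc_succ_top (by omega : 2 ≤ k + 3),
      Finset.sum_Icc_succ_top (by omega : 2 ≤ k + 2), ← hA, ← hC]
    ring
  have hdiff : ∑ l ∈ Finset.Icc 2 (k + 1), (γ l - B) * x ^ l / l.factorial
      - ∑ l ∈ Finset.Icc 2 (k + 1), (γ l - A) * x ^ l / l.factorial
      = (A - B) * ∑ l ∈ Finset.Icc 2 (k + 1), x ^ l / l.factorial := by
    rw [← Finset.sum_sub_distrib, Finset.mul_sum]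
    apply Finset.sum_congr rfl
    intros; ring
  have hm1 : k + 2 - 1 = k + 1 := by omega
  rw [hm1, hsumL]
  have hp2 : (0:ℝ) ≤ x ^ (k + 2) / (k + 2).factorial :=
    div_nonneg (pow_nonneg hx _) (Nat.cast_nonneg _)
  have hp3 : (0:ℝ) ≤ x ^ (k + 3) / (k + 3).factorial :=
    div_nonneg (pow_nonneg hx _) (Nat.cast_nonneg _)
  have hAB : (0:ℝ) ≤ A - B := by linarith
  have hAC : (0:ℝ) ≤ A - C := by linarith
  have hE : (∑ l ∈ Finset.Icc 2 (k + 1), x ^ l / l.factorial)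
      + x ^ (k + 2) / (k + 2).factorial + x ^ (k + 3) / (k + 3).factorial
      ≤ Real.exp x - 1 - x := hsum3 ▸ hexp
  have h1 : (0:ℝ) ≤ (A - B) * (Real.exp x - 1 - x
      - ((∑ l ∈ Finset.Icc 2 (k + 1), x ^ l / l.factorial)
        + x ^ (k + 2) / (k + 2).factorial + x ^ (k + 3) / (k + 3).factorial)) :=
    mul_nonneg hAB (by linarith)
  have h2 : (0:ℝ) ≤ (A - C) * (x ^ (k + 3) / (k + 3).factorial) := mul_nonneg hAC hp3
  clear_value A B C
  nlinarith [h1, h2, hdiff]
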